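/- arXiv:1502.07981 — 8 statements merged into one kernel-verified Lean document; each statement's English description precedes it below -/
import Mathlib

section
/- As permutations of X^ℕ one has ab⁻¹ = bc⁻¹ = ca⁻¹; denoting this common element by α, α maps x₁x₂x₃… to σ(x₁)σ(x₂)σ(x₃)…, where σ is the 3-cycle (1 3 2) of X, and in particular α³ = 1. Moreover α⁻¹ = ac⁻¹ = ba⁻¹ = cb⁻¹, and also a⁻¹b = b⁻¹c = c⁻¹a and a⁻¹c = b⁻¹a = c⁻¹b. -/
/-!
We formalize the automaton `A` of the paper: alphabet `X = {1,2,3}` is encoded as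
`Fin 3` (letter `i+1` ↦ `i`), states `a, b, c` are encoded as `0, 1, 2 : Fin 3`.
Each state induces a permutation of the space `ℕ → Fin 3` of infinite sequences.

Note on conventions: in the paper, products of tree automorphisms compose
left-to-right (in a word `s₁s₂⋯sₙ`, the letter `s₁` acts first); in Mathlib,
`(f * g) w = f (g w)`, i.e. the right factor acts first.  Hence a paper word
`uv` is rendered as the Lean product `v * u`; e.g. the paper's `α = ab⁻¹`
(apply `a`, then `b⁻¹`) is `b⁻¹ * a` below.
-/

namespace Lamplighter

section Generic

variable {S X : Type*}

/-- The state of the automaton after reading the first `n` letters of `w`, starting at `s`. -/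
def run (nxt : S → X → S) (s : S) (w : ℕ → X) : ℕ → S
  | 0 => s
  | n + 1 => nxt (run nxt s w n) (w n)

/-- The output sequence of the automaton started in state `s` reading `w`. -/
def fwd (nxt : S → X → S) (out : S → Equiv.Perm X) (s : S) (w : ℕ → X) : ℕ → X :=
  fun n => out (run nxt s w n) (w n)

/-- Transition function of the inverse automaton. -/
def invNxt (nxt : S → X → S) (out : S → Equiv.Perm X) (s : S) (y : X) : S :=
  nxt s ((out s).symm y)

/-- The action of the inverse automaton, started at state `s`. -/
def bwd (nxt : S → X → S) (out : S → Equiv.Perm X) (s : S) (y : ℕ → X) : ℕ → X :=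
  fun n => (out (run (invNxt nxt out) s y n)).symm (y n)

theorem run_inv_fwd (nxt : S → X → S) (out : S → Equiv.Perm X) (s : S) (w : ℕ → X) :
    ∀ n, run (invNxt nxt out) s (fwd nxt out s w) n = run nxt s w n := by
  intro n
  induction n with
  | zero => rfl
  | succ n ih => simp [run, ih, invNxt, fwd]

theorem run_bwd (nxt : S → X → S) (out : S → Equiv.Perm X) (s : S) (y : ℕ → X) :
    ∀ n, run nxt s (bwd nxt out s y) n = run (invNxt nxt out) s y n := by
  intro n
  induction n with
  | zero => rfl
  | succ n ih => simp [run, ih, bwd, invNxt]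

/-- The permutation of the space of infinite sequences induced by state `s`
of an invertible automaton. -/
def statePerm (nxt : S → X → S) (out : S → Equiv.Perm X) (s : S) : Equiv.Perm (ℕ → X) where
  toFun := fwd nxt out s
  invFun := bwd nxt out s
  left_inv := fun w => funext fun n => by simp [bwd, run_inv_fwd, fwd]
  right_inv := fun y => funext fun n => by simp [fwd, run_bwd, bwd]

end Generic

/-- The alphabet `X = {1,2,3}`, encoded as `Fin 3`. -/
abbrev X3 := Fin 3

/-- Transition function of the automaton `A` (states `a = 0`, `b = 1`, `c = 2`):
from `a`: `1 ↦ a, 2 ↦ b, 3 ↦ c`; from `b`: `1 ↦ c, 2 ↦ a, 3 ↦ b`;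
from `c`: `1 ↦ b, 2 ↦ c, 3 ↦ a`. -/
def nxtA : Fin 3 → X3 → Fin 3 := ![![0, 1, 2], ![2, 0, 1], ![1, 2, 0]]

/-- Output permutations of the automaton `A`: state `a` acts on letters as the
transposition `(2 3)`, state `b` as `(1 3)`, state `c` as `(1 2)`. -/
def outA : Fin 3 → Equiv.Perm X3 := ![Equiv.swap 1 2, Equiv.swap 0 2, Equiv.swap 0 1]

/-- The permutation of `X^ℕ` given by state `a`. -/
def a : Equiv.Perm (ℕ → X3) := statePerm nxtA outA 0

/-- The permutation of `X^ℕ` given by state `b`. -/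
def b : Equiv.Perm (ℕ → X3) := statePerm nxtA outA 1

/-- The permutation of `X^ℕ` given by state `c`. -/
def c : Equiv.Perm (ℕ → X3) := statePerm nxtA outA 2

/-- The group `G_A` generated by the automaton `A`. -/
def GA : Subgroup (Equiv.Perm (ℕ → X3)) := Subgroup.closure {a, b, c}

/-- The element `α = ab⁻¹` of the paper (first apply `a`, then `b⁻¹`). -/
def α : Equiv.Perm (ℕ → X3) := b⁻¹ * a

/-- The set `W` of permutations acting coordinatewise by a sequence of even
permutations of the alphabet. -/
def W : Set (Equiv.Perm (ℕ → X3)) :=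
  {g | ∃ π : ℕ → Equiv.Perm X3, (∀ n, Equiv.Perm.sign (π n) = 1) ∧
    ∀ (w : ℕ → X3) (n : ℕ), g w n = π n (w n)}

/-- The subgroup `N` generated by the conjugates `a⁻ⁿ α aⁿ`, `n ∈ ℤ`
(in Lean's composition order: `aⁿ * α * a⁻ⁿ`). -/
def N : Subgroup (Equiv.Perm (ℕ → X3)) :=
  Subgroup.closure {g | ∃ n : ℤ, g = a ^ n * α * a ^ (-n)}

/-- The pointwise permutation by `σ = (finRotate 3).symm`. -/
def P : Equiv.Perm (ℕ → X3) := Equiv.arrowCongr (Equiv.refl ℕ) (finRotate 3).symm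

lemma P_apply (w : ℕ → X3) (n : ℕ) : P w n = (finRotate 3).symm (w n) := rfl

lemma nxt_shift : ∀ (s : Fin 3) (x : X3),
    nxtA (s + 1) ((finRotate 3).symm x) = nxtA s x + 1 := by decide

lemma out_shift : ∀ (s : Fin 3) (x : X3),
    outA (s + 1) ((finRotate 3).symm x) = outA s x := by decide

lemma run_shift (s : Fin 3) (w : ℕ → X3) :
    ∀ n, run nxtA (s + 1) (fun k => (finRotate 3).symm (w k)) n = run nxtA s w n + 1 := by
  intro n
  induction n with
  | zero => rfl
  | succ n ih => simp only [run]; rw [ih, nxt_shift]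

lemma statePerm_shift (s : Fin 3) :
    statePerm nxtA outA s = statePerm nxtA outA (s + 1) * P := by
  apply Equiv.ext
  intro w
  funext n
  show fwd nxtA outA s w n = fwd nxtA outA (s + 1) (P w) n
  have : P w = fun k => (finRotate 3).symm (w k) := rfl
  rw [this]
  simp only [fwd]; rw [run_shift, out_shift]

lemma ha : a = b * P := statePerm_shift 0
lemma hb : b = c * P := statePerm_shift 1
lemma hc : c = a * P := statePerm_shift 2

lemma P_cube : P ^ 3 = 1 := by
  apply Equiv.ext
  intro w
  funext n
  have h : ∀ x : X3, (finRotate 3).symm ((finRotate 3).symm ((finRotate 3).symm x)) = x := by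
    decide
  show (finRotate 3).symm ((finRotate 3).symm ((finRotate 3).symm (w n))) = w n
  exact h (w n)

/-- As permutations of `X^ℕ`: `ab⁻¹ = bc⁻¹ = ca⁻¹`; this common
element `α` maps `x₁x₂x₃…` to `σ(x₁)σ(x₂)σ(x₃)…` where `σ` is the 3-cycle `(1 3 2)`
of the alphabet (in the `Fin 3` encoding, `σ = (finRotate 3).symm`), so `α³ = 1`.
Moreover `α⁻¹ = ac⁻¹ = ba⁻¹ = cb⁻¹`, `a⁻¹b = b⁻¹c = c⁻¹a`, and `a⁻¹c = b⁻¹a = c⁻¹b`.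
(Paper words compose left-to-right, so e.g. `ab⁻¹` is `b⁻¹ * a` in Lean.) -/
theorem alpha_identities :
    b⁻¹ * a = c⁻¹ * b ∧ c⁻¹ * b = a⁻¹ * c ∧
    (∀ (w : ℕ → X3) (n : ℕ), α w n = (finRotate 3).symm (w n)) ∧
    α ^ 3 = 1 ∧
    α⁻¹ = c⁻¹ * a ∧ c⁻¹ * a = a⁻¹ * b ∧ a⁻¹ * b = b⁻¹ * c ∧
    b * a⁻¹ = c * b⁻¹ ∧ c * b⁻¹ = a * c⁻¹ ∧
    c * a⁻¹ = a * b⁻¹ ∧ a * b⁻¹ = b * c⁻¹ := by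
  have hP3 : P * P * P = 1 := by
    have h := P_cube
    rwa [pow_succ, pow_succ, pow_one] at h
  have hP2 : P * P = P⁻¹ := eq_inv_of_mul_eq_one_left hP3
  have e1 : b⁻¹ * a = P := by rw [ha]; group
  have e2 : c⁻¹ * b = P := by rw [hb]; group
  have e3 : a⁻¹ * c = P := by rw [hc]; group
  have hα : α = P := e1
  have f1 : a⁻¹ * b = P⁻¹ := by rw [ha]; group
  have f2 : b⁻¹ * c = P⁻¹ := by rw [hb]; group
  have f3 : c⁻¹ * a = P⁻¹ := by
    have h : c⁻¹ * a = (c⁻¹ * b) * (b⁻¹ * a) := by group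
    rw [h, e2, e1, hP2]
  have ha2 : a = c * (P * P) := by rw [ha, hb]; group
  have g1 : b * a⁻¹ = c * b⁻¹ := by rw [ha2, hb]; group
  have g2 : c * b⁻¹ = a * c⁻¹ := by
    rw [ha2, hb, hP2]; group
  have g3 : c * a⁻¹ = a * b⁻¹ := by
    have h12 : b * a⁻¹ = a * c⁻¹ := g1.trans g2
    calc c * a⁻¹ = (a * c⁻¹)⁻¹ := by group
      _ = (b * a⁻¹)⁻¹ := by rw [h12]
      _ = a * b⁻¹ := by group
  have g4 : a * b⁻¹ = b * c⁻¹ := by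
    calc a * b⁻¹ = (b * a⁻¹)⁻¹ := by group
      _ = (c * b⁻¹)⁻¹ := by rw [g1]
      _ = b * c⁻¹ := by group
  refine ⟨e1.trans e2.symm, e2.trans e3.symm, ?_, ?_, ?_, f3.trans f1.symm,
    f1.trans f2.symm, g1, g2, g3, g4⟩
  · intro w n
    rw [hα]
    rfl
  · rw [hα]
    exact P_cube
  · rw [hα]
    exact f3.symm

end Lamplighter
end

section
/- G_A is generated by the two elements a and α, i.e., the subgroup of the permutation group of X^ℕ generated by {a, α} equals G_A. -/
/-!
We formalize the automaton `A` of the paper: alphabet `X = {1,2,3}` is encoded as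
`Fin 3` (letter `i+1` ↦ `i`), states `a, b, c` are encoded as `0, 1, 2 : Fin 3`.
Each state induces a permutation of the space `ℕ → Fin 3` of infinite sequences.

Note on conventions: in the paper, products of tree automorphisms compose
left-to-right (in a word `s₁s₂⋯sₙ`, the letter `s₁` acts first); in Mathlib,
`(f * g) w = f (g w)`, i.e. the right factor acts first.  Hence a paper word
`uv` is rendered as the Lean product `v * u`; e.g. the paper's `α = ab⁻¹`
(apply `a`, then `b⁻¹`) is `b⁻¹ * a` below.
-/

namespace Lamplighter

/-- Reachable quadruples of states of the product automaton computing
`a ∘ b⁻¹ ∘ a` together with `c`. -/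
def Q : List (Fin 3 × Fin 3 × Fin 3 × Fin 3) :=
  [(0,1,0,2),(0,1,2,1),(1,2,0,2),(1,2,1,0),(2,0,1,0),(2,0,2,1)]

lemma step_lemma : ∀ q ∈ Q, ∀ x : X3,
    (nxtA q.1 x, invNxt nxtA outA q.2.1 (outA q.1 x),
      nxtA q.2.2.1 ((outA q.2.1).symm (outA q.1 x)), nxtA q.2.2.2 x) ∈ Q ∧
    outA q.2.2.1 ((outA q.2.1).symm (outA q.1 x)) = outA q.2.2.2 x := by decide

lemma key (w : ℕ → X3) : ∀ n,
    (run nxtA 0 w n,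
     run (invNxt nxtA outA) 1 (fwd nxtA outA 0 w) n,
     run nxtA 0 (bwd nxtA outA 1 (fwd nxtA outA 0 w)) n,
     run nxtA 2 w n) ∈ Q := by
  intro n
  induction n with
  | zero =>
    exact (by decide : ((0:Fin 3),(1:Fin 3),(0:Fin 3),(2:Fin 3)) ∈ Q)
  | succ n ih =>
    have h := (step_lemma _ ih (w n)).1
    simpa [run, fwd, bwd] using h

lemma out_eq (w : ℕ → X3) (n : ℕ) :
    fwd nxtA outA 0 (bwd nxtA outA 1 (fwd nxtA outA 0 w)) n
      = fwd nxtA outA 2 w n := by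
  have h := (step_lemma _ (key w n) (w n)).2
  simpa [fwd, bwd] using h

lemma c_eq : c = a * b⁻¹ * a := by
  apply Equiv.ext
  intro w
  funext n
  have : (b⁻¹ : Equiv.Perm (ℕ → X3)) = (statePerm nxtA outA 1).symm := rfl
  show fwd nxtA outA 2 w n = _
  rw [← out_eq w n]
  rfl

lemma b_mem : b ∈ Subgroup.closure ({a, α} : Set (Equiv.Perm (ℕ → X3))) := by
  have ha : a ∈ Subgroup.closure ({a, α} : Set (Equiv.Perm (ℕ → X3))) :=
    Subgroup.subset_closure (by simp)
  have hα : α ∈ Subgroup.closure ({a, α} : Set (Equiv.Perm (ℕ → X3))) :=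
    Subgroup.subset_closure (by simp)
  have : b = a * α⁻¹ := by
    rw [α]; group
  rw [this]
  exact mul_mem ha (inv_mem hα)

lemma c_mem : c ∈ Subgroup.closure ({a, α} : Set (Equiv.Perm (ℕ → X3))) := by
  have ha : a ∈ Subgroup.closure ({a, α} : Set (Equiv.Perm (ℕ → X3))) :=
    Subgroup.subset_closure (by simp)
  have hα : α ∈ Subgroup.closure ({a, α} : Set (Equiv.Perm (ℕ → X3))) :=
    Subgroup.subset_closure (by simp)
  have : c = a * α := by
    rw [c_eq, α]; group
  rw [this]
  exact mul_mem ha hα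

/-- `G_A` is generated by the two elements `a` and `α`. -/
theorem GA_eq_closure_a_alpha :
    Subgroup.closure {a, α} = GA := by
  apply le_antisymm
  · rw [Subgroup.closure_le]
    intro x hx
    simp only [Set.mem_insert_iff, Set.mem_singleton_iff] at hx
    have ha : a ∈ GA := Subgroup.subset_closure (by simp)
    have hb : b ∈ GA := Subgroup.subset_closure (by simp)
    rcases hx with rfl | rfl
    · exact ha
    · exact mul_mem (inv_mem hb) ha
  · rw [GA, Subgroup.closure_le]
    intro x hx
    simp only [Set.mem_insert_iff, Set.mem_singleton_iff] at hx
    rcases hx with rfl | rfl | rfl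
    · exact Subgroup.subset_closure (by simp)
    · exact b_mem
    · exact c_mem

end Lamplighter
end

section
/- For every g ∈ W and all x, y ∈ {a, b, c}, the permutations x⁻¹gy and xgy⁻¹ belong to W. -/
/-!
We formalize the automaton `A` of the paper: alphabet `X = {1,2,3}` is encoded as
`Fin 3` (letter `i+1` ↦ `i`), states `a, b, c` are encoded as `0, 1, 2 : Fin 3`.
Each state induces a permutation of the space `ℕ → Fin 3` of infinite sequences.

Note on conventions: in the paper, products of tree automorphisms compose
left-to-right (in a word `s₁s₂⋯sₙ`, the letter `s₁` acts first); in Mathlib,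
`(f * g) w = f (g w)`, i.e. the right factor acts first.  Hence a paper word
`uv` is rendered as the Lean product `v * u`; e.g. the paper's `α = ab⁻¹`
(apply `a`, then `b⁻¹`) is `b⁻¹ * a` below.
-/

namespace Lamplighter

lemma nxt_eq (s x : Fin 3) : nxtA s x = x - s := by revert s x; decide

lemma out_eq_s3 (s z : Fin 3) : outA s z = 2 * s - z := by revert s z; decide

lemma outsymm_eq (s z : Fin 3) : (outA s).symm z = 2 * s - z := by revert s z; decide

lemma perm3_cases (π : Equiv.Perm (Fin 3)) :
    (∀ z, π z = z + π 0) ∨ (∃ i j : Fin 3, i ≠ j ∧ π = Equiv.swap i j) := by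
  revert π; decide

lemma even_is_add (π : Equiv.Perm (Fin 3)) (h : Equiv.Perm.sign π = 1) :
    ∀ z, π z = z + π 0 := by
  rcases perm3_cases π with h' | ⟨i, j, hij, rfl⟩
  · exact h'
  · rw [Equiv.Perm.sign_swap hij] at h; exact absurd h (by decide)

lemma addRight_eq_cases (k : Fin 3) :
    Equiv.addRight k = 1 ∨ Equiv.addRight k = finRotate 3 ∨
      Equiv.addRight k = (finRotate 3) ^ 2 := by
  fin_cases k
  · left; ext z; simp
  · right; left; ext z; simp [finRotate_succ_apply]
  · right; right; ext z
    simp [finRotate_succ_apply, pow_two, Equiv.Perm.mul_apply]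
    open Fin.CommRing in ring

lemma sign_addRight (k : Fin 3) : Equiv.Perm.sign (Equiv.addRight k) = 1 := by
  rcases addRight_eq_cases k with h | h | h <;> rw [h] <;>
    simp [sign_finRotate]

/-- Difference sequence for `y * g * x⁻¹`. -/
def dseq1 (d0 : Fin 3) (k : ℕ → Fin 3) : ℕ → Fin 3
  | 0 => d0
  | n + 1 => k n - dseq1 d0 k n

/-- Difference sequence for `y⁻¹ * g * x`. -/
def dseq2 (d0 : Fin 3) (k : ℕ → Fin 3) : ℕ → Fin 3
  | 0 => d0
  | n + 1 => dseq2 d0 k n - k n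

lemma run1 (x' y' : Fin 3) (k : ℕ → Fin 3) (w : ℕ → X3) : ∀ n,
    run nxtA y' (fun m => bwd nxtA outA x' w m + k m) n =
      run (invNxt nxtA outA) x' w n + dseq1 (y' - x') k n := by
  intro n
  induction n with
  | zero => simp [run, dseq1]
  | succ n ih =>
    show nxtA _ _ = invNxt nxtA outA _ _ + dseq1 (y' - x') k (n + 1)
    rw [ih, nxt_eq, invNxt, nxt_eq, outsymm_eq]
    simp only [bwd, outsymm_eq, dseq1]
    open Fin.CommRing in ring

lemma out1 (x' y' : Fin 3) (k : ℕ → Fin 3) (w : ℕ → X3) (n : ℕ) :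
    fwd nxtA outA y' (fun m => bwd nxtA outA x' w m + k m) n =
      w n + (2 * dseq1 (y' - x') k n - k n) := by
  rw [fwd, run1, out_eq_s3]
  simp only [bwd, outsymm_eq]
  open Fin.CommRing in ring

lemma run2 (x' y' : Fin 3) (k : ℕ → Fin 3) (w : ℕ → X3) : ∀ n,
    run (invNxt nxtA outA) y' (fun m => fwd nxtA outA x' w m + k m) n =
      run nxtA x' w n + dseq2 (y' - x') k n := by
  intro n
  induction n with
  | zero => simp [run, dseq2]
  | succ n ih =>
    show invNxt nxtA outA _ _ = nxtA _ _ + dseq2 (y' - x') k (n + 1)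
    rw [invNxt, nxt_eq, outsymm_eq, ih, nxt_eq]
    simp only [fwd, out_eq_s3, dseq2]
    open Fin.CommRing in ring

lemma out2 (x' y' : Fin 3) (k : ℕ → Fin 3) (w : ℕ → X3) (n : ℕ) :
    bwd nxtA outA y' (fun m => fwd nxtA outA x' w m + k m) n =
      w n + (2 * dseq2 (y' - x') k n - k n) := by
  rw [bwd, run2, outsymm_eq]
  simp only [fwd, out_eq_s3]
  open Fin.CommRing in ring

lemma mem_abc {x : Equiv.Perm (ℕ → X3)}
    (hx : x ∈ ({a, b, c} : Set (Equiv.Perm (ℕ → X3)))) :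
    ∃ s : Fin 3, x = statePerm nxtA outA s := by
  rcases hx with rfl | rfl | rfl
  exacts [⟨0, rfl⟩, ⟨1, rfl⟩, ⟨2, rfl⟩]

lemma statePerm_apply (s : Fin 3) (w : ℕ → X3) :
    statePerm nxtA outA s w = fwd nxtA outA s w := rfl

lemma statePerm_inv_apply (s : Fin 3) (w : ℕ → X3) :
    (statePerm nxtA outA s)⁻¹ w = bwd nxtA outA s w := rfl

/-- For every `g ∈ W` and all `x, y ∈ {a, b, c}`, the permutations
`x⁻¹gy` and `xgy⁻¹` belong to `W`.  (Paper words compose left-to-right, so the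
paper's `x⁻¹gy` is `y * g * x⁻¹` in Lean, and `xgy⁻¹` is `y⁻¹ * g * x`.) -/
theorem conj_mem_W :
    ∀ g ∈ W, ∀ x ∈ ({a, b, c} : Set (Equiv.Perm (ℕ → X3))),
      ∀ y ∈ ({a, b, c} : Set (Equiv.Perm (ℕ → X3))),
        y * g * x⁻¹ ∈ W ∧ y⁻¹ * g * x ∈ W := by
  rintro g ⟨π, hsign, hπ⟩ x hx y hy
  obtain ⟨x', rfl⟩ := mem_abc hx
  obtain ⟨y', rfl⟩ := mem_abc hy
  set k : ℕ → Fin 3 := fun n => π n 0 with hk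
  have hadd : ∀ n z, π n z = z + k n := fun n => even_is_add (π n) (hsign n)
  constructor
  · refine ⟨fun n => Equiv.addRight (2 * dseq1 (y' - x') k n - k n),
      fun n => sign_addRight _, fun w n => ?_⟩
    have h1 : g ((statePerm nxtA outA x')⁻¹ w) =
        fun m => bwd nxtA outA x' w m + k m := by
      funext m
      rw [hπ _ m, hadd, statePerm_inv_apply]
    simp only [Equiv.Perm.mul_apply]
    rw [h1, statePerm_apply, out1, Equiv.coe_addRight]
  · refine ⟨fun n => Equiv.addRight (2 * dseq2 (y' - x') k n - k n),
      fun n => sign_addRight _, fun w n => ?_⟩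
    have h2 : g (statePerm nxtA outA x' w) =
        fun m => fwd nxtA outA x' w m + k m := by
      funext m
      rw [hπ _ m, hadd, statePerm_apply]
    simp only [Equiv.Perm.mul_apply]
    rw [h2, statePerm_inv_apply, out2, Equiv.coe_addRight]

end Lamplighter
end

section
/- For every g ∈ W the following equalities hold as permutations of X^ℕ: a⁻¹ga = b⁻¹gb = c⁻¹gc, a⁻¹gb = b⁻¹gc = c⁻¹ga, and a⁻¹gc = b⁻¹ga = c⁻¹gb. -/
/-!
We formalize the automaton `A` of the paper: alphabet `X = {1,2,3}` is encoded as
`Fin 3` (letter `i+1` ↦ `i`), states `a, b, c` are encoded as `0, 1, 2 : Fin 3`.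
Each state induces a permutation of the space `ℕ → Fin 3` of infinite sequences.

Note on conventions: in the paper, products of tree automorphisms compose
left-to-right (in a word `s₁s₂⋯sₙ`, the letter `s₁` acts first); in Mathlib,
`(f * g) w = f (g w)`, i.e. the right factor acts first.  Hence a paper word
`uv` is rendered as the Lean product `v * u`; e.g. the paper's `α = ab⁻¹`
(apply `a`, then `b⁻¹`) is `b⁻¹ * a` below.
-/

namespace Lamplighter

lemma even_comm : ∀ π : Equiv.Perm X3, Equiv.Perm.sign π = 1 → ∀ x : X3, π (x + 2) = π x + 2 := by
  decide

lemma invNxt_shift : ∀ r : Fin 3, ∀ y : X3,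
    invNxt nxtA outA (r + 1) y = invNxt nxtA outA r y + 1 := by decide

lemma outA_symm_shift : ∀ r : Fin 3, ∀ y : X3,
    (outA (r + 1)).symm y = (outA r).symm y + 2 := by decide

lemma nxtA_shift : ∀ r : Fin 3, ∀ x : X3, nxtA (r + 1) (x + 2) = nxtA r x + 1 := by decide

lemma outA_shift : ∀ r : Fin 3, ∀ x : X3, outA (r + 1) (x + 2) = outA r x := by decide

lemma run_inv_shift (t : Fin 3) (w : ℕ → X3) (n : ℕ) :
    run (invNxt nxtA outA) (t + 1) w n = run (invNxt nxtA outA) t w n + 1 := by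
  induction n with
  | zero => rfl
  | succ n ih => simp only [run, ih, invNxt_shift]

lemma bwd_shift (t : Fin 3) (w : ℕ → X3) (n : ℕ) :
    bwd nxtA outA (t + 1) w n = bwd nxtA outA t w n + 2 := by
  simp only [bwd, run_inv_shift, outA_symm_shift]

lemma run_fwd_shift (s : Fin 3) (v : ℕ → X3) (n : ℕ) :
    run nxtA (s + 1) (fun m => v m + 2) n = run nxtA s v n + 1 := by
  induction n with
  | zero => rfl
  | succ n ih => simp only [run, ih, nxtA_shift]

lemma fwd_shift (s : Fin 3) (v : ℕ → X3) (n : ℕ) :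
    fwd nxtA outA (s + 1) (fun m => v m + 2) n = fwd nxtA outA s v n := by
  simp only [fwd, run_fwd_shift, outA_shift]

lemma key_s4 (s t : Fin 3) {g : Equiv.Perm (ℕ → X3)} (hg : g ∈ W) :
    statePerm nxtA outA (s + 1) * g * (statePerm nxtA outA (t + 1))⁻¹ =
    statePerm nxtA outA s * g * (statePerm nxtA outA t)⁻¹ := by
  obtain ⟨π, hsign, hπ⟩ := hg
  apply Equiv.ext
  intro w
  funext n
  have hinv : ∀ u : Fin 3, (statePerm nxtA outA u)⁻¹ w = bwd nxtA outA u w := fun _ => rfl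
  have hv : g (bwd nxtA outA (t + 1) w) = fun m => g (bwd nxtA outA t w) m + 2 := by
    funext m
    rw [hπ, hπ, bwd_shift, even_comm (π m) (hsign m)]
  show fwd nxtA outA (s + 1) (g ((statePerm nxtA outA (t + 1))⁻¹ w)) n =
    fwd nxtA outA s (g ((statePerm nxtA outA t)⁻¹ w)) n
  rw [hinv, hinv, hv, fwd_shift]

/-- For every `g ∈ W`: `a⁻¹ga = b⁻¹gb = c⁻¹gc`,
`a⁻¹gb = b⁻¹gc = c⁻¹ga`, and `a⁻¹gc = b⁻¹ga = c⁻¹gb`.  (Paper words compose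
left-to-right, so the paper's `x⁻¹gy` is `y * g * x⁻¹` in Lean.) -/
theorem conj_equalities :
    ∀ g ∈ W,
      (a * g * a⁻¹ = b * g * b⁻¹ ∧ b * g * b⁻¹ = c * g * c⁻¹) ∧
      (b * g * a⁻¹ = c * g * b⁻¹ ∧ c * g * b⁻¹ = a * g * c⁻¹) ∧
      (c * g * a⁻¹ = a * g * b⁻¹ ∧ a * g * b⁻¹ = b * g * c⁻¹) := by
  intro g hg
  have k : ∀ s t : Fin 3,
      statePerm nxtA outA (s + 1) * g * (statePerm nxtA outA (t + 1))⁻¹ =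
      statePerm nxtA outA s * g * (statePerm nxtA outA t)⁻¹ := fun s t => key_s4 s t hg
  have e1 : (0 + 1 : Fin 3) = 1 := rfl
  have e2 : (1 + 1 : Fin 3) = 2 := rfl
  have e3 : (2 + 1 : Fin 3) = 0 := rfl
  have k00 := k 0 0; have k11 := k 1 1; have k10 := k 1 0
  have k21 := k 2 1; have k20 := k 2 0; have k01 := k 0 1
  rw [e1] at k00 k01 k10; rw [e2] at k11 k21 k01; rw [e3] at k20 k21
  rw [e1] at k20
  rw [show a = statePerm nxtA outA 0 from rfl, show b = statePerm nxtA outA 1 from rfl,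
    show c = statePerm nxtA outA 2 from rfl]
  exact ⟨⟨k00.symm, k11.symm⟩, ⟨k10.symm, k21.symm⟩, ⟨k20.symm, k01.symm⟩⟩

end Lamplighter
end

section
/- For every n ∈ ℕ, the stabilizer in G_A of the word 1ⁿ (the letter 1 repeated n times) acts transitively on the set {1ⁿx : x ∈ X}: for every x ∈ X there exists g ∈ G_A with g(1ⁿ) = 1ⁿ and g(1ⁿ1) = 1ⁿx. -/
/-!
We formalize the automaton `A` of the paper: alphabet `X = {1,2,3}` is encoded as
`Fin 3` (letter `i+1` ↦ `i`), states `a, b, c` are encoded as `0, 1, 2 : Fin 3`.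
Each state induces a permutation of the space `ℕ → Fin 3` of infinite sequences.

Note on conventions: in the paper, products of tree automorphisms compose
left-to-right (in a word `s₁s₂⋯sₙ`, the letter `s₁` acts first); in Mathlib,
`(f * g) w = f (g w)`, i.e. the right factor acts first.  Hence a paper word
`uv` is rendered as the Lean product `v * u`; e.g. the paper's `α = ab⁻¹`
(apply `a`, then `b⁻¹`) is `b⁻¹ * a` below.
-/

namespace Lamplighter

/-! ### Auxiliary development: the affine structure of the automaton

The automaton is secretly affine over `F₃`: in state `s` reading letter `x` it
outputs `2s + 2x` and moves to state `x + 2s`.  Consequently `b⁻¹ * a` is the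
coordinatewise translation by `2`, and conjugating a coordinatewise translation
by `a` again yields a coordinatewise translation.  Iterating
`t ↦ Lm t + t` starting from the constant vector `2` produces translation
vectors supported on `[n, ∞)` with nonzero `n`-th coordinate. -/

lemma nxtA_eq' : ∀ s x : Fin 3, nxtA s x = x + 2 * s := by decide

lemma nxtA_eq (s x : Fin 3) : nxtA s x = x + 2 * s := nxtA_eq' s x

lemma outA_eq' : ∀ s x : Fin 3, outA s x = 2 * s + 2 * x := by decide

lemma outA_eq (s x : Fin 3) : outA s x = 2 * s + 2 * x := outA_eq' s x

/-- The deviation of the state path caused by translating the input by `t`. -/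
def dd (t : ℕ → X3) : ℕ → X3
  | 0 => 0
  | n + 1 => t n + 2 * dd t n

/-- The linear map on translation vectors induced by conjugation by `a`. -/
def Lm (t : ℕ → X3) : ℕ → X3 := fun n => 2 * dd t n + 2 * t n

lemma run_add (s : Fin 3) (t w : ℕ → X3) (n : ℕ) :
    run nxtA s (fun i => w i + t i) n = run nxtA s w n + dd t n := by
  induction n with
  | zero => simp [run, dd]
  | succ n ih =>
    show nxtA (run nxtA s (fun i => w i + t i) n) (w n + t n)
        = nxtA (run nxtA s w n) (w n) + dd t (n + 1)
    rw [ih, nxtA_eq, nxtA_eq]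
    show _ = _ + (t n + 2 * dd t n)
    open Fin.CommRing in ring

lemma fwd_add (s : Fin 3) (t w : ℕ → X3) (n : ℕ) :
    fwd nxtA outA s (fun i => w i + t i) n = fwd nxtA outA s w n + Lm t n := by
  show outA (run nxtA s (fun i => w i + t i) n) (w n + t n)
      = outA (run nxtA s w n) (w n) + Lm t n
  rw [run_add, outA_eq, outA_eq]
  show _ = _ + (2 * dd t n + 2 * t n)
  open Fin.CommRing in ring

/-- Coordinatewise translation by the vector `t`. -/
def Tr (t : ℕ → X3) : Equiv.Perm (ℕ → X3) where
  toFun w := fun i => w i + t i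
  invFun w := fun i => w i - t i
  left_inv w := by funext i; simp
  right_inv w := by funext i; simp

lemma Tr_apply (t w : ℕ → X3) (i : ℕ) : Tr t w i = w i + t i := rfl

lemma Tr_mul (t u : ℕ → X3) : Tr t * Tr u = Tr (fun i => u i + t i) := by
  apply Equiv.ext
  intro w
  funext i
  show (w i + u i) + t i = w i + (u i + t i)
  open Fin.CommRing in ring

lemma a_mul_Tr (t : ℕ → X3) : a * Tr t = Tr (Lm t) * a := by
  apply Equiv.ext
  intro w
  funext n
  show fwd nxtA outA 0 (fun i => w i + t i) n = fwd nxtA outA 0 w n + Lm t n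
  exact fwd_add 0 t w n

lemma run_b (w : ℕ → X3) (n : ℕ) :
    run nxtA 1 (fun i => w i + 2) n = run nxtA 0 w n + 1 := by
  induction n with
  | zero => rfl
  | succ n ih =>
    show nxtA (run nxtA 1 (fun i => w i + 2) n) (w n + 2)
        = nxtA (run nxtA 0 w n) (w n) + 1
    rw [ih, nxtA_eq, nxtA_eq]
    have h : ∀ x r : Fin 3, x + 2 + 2 * (r + 1) = x + 2 * r + 1 := by decide
    exact h _ _

lemma b_mul_Tr2 : b * Tr (fun _ => 2) = a := by
  apply Equiv.ext
  intro w
  funext n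
  show outA (run nxtA 1 (fun i => w i + 2) n) (w n + 2) = outA (run nxtA 0 w n) (w n)
  rw [run_b, outA_eq, outA_eq]
  have h : ∀ x r : Fin 3, 2 * (r + 1) + 2 * (x + 2) = 2 * r + 2 * x := by decide
  exact h _ _

lemma a_mem : a ∈ GA := Subgroup.subset_closure (by simp)

lemma b_mem_s8 : b ∈ GA := Subgroup.subset_closure (by simp)

lemma Tr2_mem : Tr (fun _ => 2) ∈ GA := by
  have h : Tr (fun _ => 2) = b⁻¹ * a := by rw [← b_mul_Tr2]; group
  rw [h]
  exact mul_mem (inv_mem b_mem_s8) a_mem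

lemma Tr_Lm_mem {t : ℕ → X3} (h : Tr t ∈ GA) : Tr (Lm t) ∈ GA := by
  have e : Tr (Lm t) = a * Tr t * a⁻¹ := by rw [a_mul_Tr]; group
  rw [e]
  exact mul_mem (mul_mem a_mem h) (inv_mem a_mem)

/-- The family of translation vectors: `tv 0 = 2̄`, `tv (n+1) = Lm (tv n) + tv n`. -/
def tv : ℕ → ℕ → X3
  | 0 => fun _ => 2
  | n + 1 => fun i => Lm (tv n) i + tv n i

lemma tv_mem : ∀ n, Tr (tv n) ∈ GA := by
  intro n
  induction n with
  | zero => exact Tr2_mem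
  | succ n ih =>
    have h : Tr (tv (n + 1)) = Tr (Lm (tv n)) * Tr (tv n) := by
      rw [Tr_mul]
      congr 1
      funext i
      show Lm (tv n) i + tv n i = tv n i + Lm (tv n) i
      open Fin.CommRing in ring
    rw [show Tr (tv (n + 1)) = Tr (Lm (tv n)) * Tr (tv n) from h]
    exact mul_mem (Tr_Lm_mem ih) ih

lemma dd_eq_zero {u : ℕ → X3} {n : ℕ} (h : ∀ i < n, u i = 0) :
    ∀ i ≤ n, dd u i = 0 := by
  intro i
  induction i with
  | zero => intro _; rfl
  | succ i ih =>
    intro hi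
    show u i + 2 * dd u i = 0
    rw [h i (by omega), ih (by omega)]
    rfl

lemma tv_prop : ∀ n, (∀ i < n, tv n i = 0) ∧ (tv n n = 1 ∨ tv n n = 2) := by
  intro n
  induction n with
  | zero => exact ⟨fun i hi => absurd hi (Nat.not_lt_zero i), Or.inr rfl⟩
  | succ n ih =>
    obtain ⟨hz, hd⟩ := ih
    have hdd : ∀ i ≤ n, dd (tv n) i = 0 := dd_eq_zero hz
    constructor
    · intro i hi
      show 2 * dd (tv n) i + 2 * tv n i + tv n i = 0
      rcases Nat.lt_or_ge i n with h | h
      · rw [hdd i (le_of_lt h), hz i h]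
        rfl
      · have hi' : i = n := by omega
        subst hi'
        rw [hdd i le_rfl]
        have h3 : ∀ x : Fin 3, 2 * 0 + 2 * x + x = 0 := by decide
        exact h3 _
    · have e : tv (n + 1) (n + 1) = 2 * tv n n := by
        show 2 * dd (tv n) (n + 1) + 2 * tv n (n + 1) + tv n (n + 1) = 2 * tv n n
        have hddn : dd (tv n) (n + 1) = tv n n + 2 * dd (tv n) n := rfl
        rw [hddn, hdd n le_rfl]
        have h3 : ∀ x y : Fin 3, 2 * (x + 2 * 0) + 2 * y + y = 2 * x := by decide
        exact h3 _ _
      rw [e]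
      rcases hd with h | h <;> rw [h]
      · exact Or.inr rfl
      · exact Or.inl rfl

/-- For every `n`, the stabilizer of the word `1ⁿ` in `G_A` acts
transitively on `{1ⁿx : x ∈ X}`: for every letter `x` there is `g ∈ G_A` with
`g(1ⁿ) = 1ⁿ` and `g(1ⁿ1) = 1ⁿx`.  (The letter `1` is `0 : Fin 3`.) -/
theorem stabilizer_transitive_below :
    ∀ (n : ℕ) (x : X3), ∃ g ∈ GA,
      (∀ w : ℕ → X3, (∀ i < n, w i = 0) → ∀ i < n, g w i = 0) ∧
      (∀ w : ℕ → X3, (∀ i ≤ n, w i = 0) → (∀ i < n, g w i = 0) ∧ g w n = x) := by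
  intro n x
  obtain ⟨hz, hd⟩ := tv_prop n
  have key : ∃ v : ℕ → X3, Tr v ∈ GA ∧ (∀ i < n, v i = 0) ∧ v n = x := by
    have hone : Tr (fun _ : ℕ => (0 : X3)) ∈ GA := by
      have e : Tr (fun _ : ℕ => (0 : X3)) = 1 := by
        apply Equiv.ext
        intro w
        funext i
        show w i + 0 = w i
        exact add_zero _
      rw [e]
      exact one_mem _
    have hdouble : Tr (fun i => tv n i + tv n i) ∈ GA := by
      rw [← Tr_mul]
      exact mul_mem (tv_mem n) (tv_mem n)
    have trip : x = 0 ∨ x = 1 ∨ x = 2 := by revert x; decide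
    rcases trip with hx | hx | hx
    · exact ⟨fun _ => 0, hone, fun i _ => rfl, by rw [hx]⟩
    · rcases hd with h | h
      · exact ⟨tv n, tv_mem n, hz, by rw [h, hx]⟩
      · refine ⟨fun i => tv n i + tv n i, hdouble, ?_, ?_⟩
        · intro i hi
          show tv n i + tv n i = 0
          rw [hz i hi]
          rfl
        · show tv n n + tv n n = x
          rw [h, hx]
          decide
    · rcases hd with h | h
      · refine ⟨fun i => tv n i + tv n i, hdouble, ?_, ?_⟩
        · intro i hi
          show tv n i + tv n i = 0
          rw [hz i hi]
          rfl
        · show tv n n + tv n n = x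
          rw [h, hx]
          decide
      · exact ⟨tv n, tv_mem n, hz, by rw [h, hx]⟩
  obtain ⟨v, hvGA, hv0, hvn⟩ := key
  refine ⟨Tr v, hvGA, ?_, ?_⟩
  · intro w hw i hi
    show w i + v i = 0
    rw [hw i hi, hv0 i hi]
    rfl
  · intro w hw
    refine ⟨?_, ?_⟩
    · intro i hi
      show w i + v i = 0
      rw [hw i (le_of_lt hi), hv0 i hi]
      rfl
    · show w n + v n = x
      rw [hw n le_rfl, hvn]
      exact zero_add x

end Lamplighter
end

section
/- For every k ≥ 1, the element b^{2·3ᵏ} of G_A fixes the word 1^{3ᵏ} (the letter 1 repeated 3ᵏ times) and permutes the three words 1^{3ᵏ}x (x ∈ X) as the 3-cycle in the last letter: b^{2·3ᵏ}(1^{3ᵏ}1) = 1^{3ᵏ}2, b^{2·3ᵏ}(1^{3ᵏ}2) = 1^{3ᵏ}3, and b^{2·3ᵏ}(1^{3ᵏ}3) = 1^{3ᵏ}1. -/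
/-!
We formalize the automaton `A` of the paper: alphabet `X = {1,2,3}` is encoded as
`Fin 3` (letter `i+1` ↦ `i`), states `a, b, c` are encoded as `0, 1, 2 : Fin 3`.
Each state induces a permutation of the space `ℕ → Fin 3` of infinite sequences.

Note on conventions: in the paper, products of tree automorphisms compose
left-to-right (in a word `s₁s₂⋯sₙ`, the letter `s₁` acts first); in Mathlib,
`(f * g) w = f (g w)`, i.e. the right factor acts first.  Hence a paper word
`uv` is rendered as the Lean product `v * u`; e.g. the paper's `α = ab⁻¹`
(apply `a`, then `b⁻¹`) is `b⁻¹ * a` below.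
-/

namespace Lamplighter

open PowerSeries
open Fin.CommRing

/-- The "state label": `f(a)=0, f(b)=2, f(c)=1`, so that `out s x = 2x + φ s`. -/
def φ : Fin 3 → X3 := ![0, 2, 1]

lemma out_eq_s9 : ∀ s x : Fin 3, outA s x = 2 * x + φ s := by decide

lemma nxt_phi : ∀ s x : Fin 3, φ (nxtA s x) = 2 * x + 2 * φ s := by decide

lemma fwd_eq (s : Fin 3) (w : ℕ → X3) (n : ℕ) :
    fwd nxtA outA s w n = 2 * w n + φ (run nxtA s w n) := by
  simp [fwd, out_eq_s9]

lemma run_phi (s : Fin 3) (w : ℕ → X3) (n : ℕ) :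
    φ (run nxtA s w (n + 1)) = 2 * w n + 2 * φ (run nxtA s w n) := by
  simp [run, nxt_phi]

lemma b_apply (w : ℕ → X3) : b w = fwd nxtA outA 1 w := rfl

lemma Bw0 (w : ℕ → X3) : b w 0 = 2 * w 0 + 2 := by
  rw [b_apply, fwd_eq]
  norm_num [show φ (run nxtA 1 w 0) = 2 from rfl]

lemma Bsucc (w : ℕ → X3) (n : ℕ) :
    b w (n + 1) = 2 * w (n + 1) + w n + 2 * b w n := by
  simp only [b_apply, fwd_eq, run_phi]
  have : ∀ x y z : X3, 2 * x + (2 * y + 2 * z) = 2 * x + y + 2 * (2 * y + z) := by decide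
  exact this _ _ _

lemma h3 : (3 : PowerSeries X3) = 0 := by
  have : (3 : PowerSeries X3) = C (R := X3) 3 := (map_ofNat (C (R := X3)) 3).symm
  rw [this, show (3 : X3) = 0 by decide, map_zero]

lemma h2C : (2 : PowerSeries X3) = C (R := X3) 2 := (map_ofNat (C (R := X3)) 2).symm

lemma cube (p q : PowerSeries X3) : (p + q) ^ 3 = p ^ 3 + q ^ 3 := by
  linear_combination (p ^ 2 * q + p * q ^ 2) * h3

lemma frob : ∀ (k : ℕ) (p q : PowerSeries X3), (p + q) ^ 3 ^ k = p ^ 3 ^ k + q ^ 3 ^ k := by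
  intro k
  induction k with
  | zero => simp
  | succ k ih =>
    intro p q
    rw [pow_succ, pow_mul, pow_mul, pow_mul, ih, cube]

lemma pow3k : ∀ (x : X3) (k : ℕ), x ^ 3 ^ k = x := by
  intro x k
  induction k with
  | zero => simp
  | succ k ih =>
    have x3 : ∀ y : X3, y ^ 3 = y := by decide
    rw [pow_succ, pow_mul, ih, x3]

lemma two_pow3k (k : ℕ) : (2 : PowerSeries X3) ^ 3 ^ k = 2 := by
  rw [h2C, ← map_pow, pow3k]

lemma step (w : ℕ → X3) :
    (1 + X) * mk (⇑b w) = (2 + X) * mk w + 2 := by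
  rw [h2C, add_mul, add_mul, one_mul]
  ext n
  rcases n with _ | n
  · simp only [map_add, coeff_zero_X_mul, coeff_C_mul, coeff_mk, coeff_zero_C, add_zero]
    exact congrArg _ (Bw0 w)
  · simp only [map_add, coeff_succ_X_mul, coeff_C_mul, coeff_mk, coeff_C, Nat.succ_ne_zero,
      if_false, add_zero]
    refine congrArg _ ?_
    rw [Bsucc]
    have : ∀ x y z : X3, 2 * x + y + 2 * z + z = 2 * x + y := by decide
    exact this _ _ _

lemma master (j : ℕ) (w : ℕ → X3) :
    (1 + X) ^ j * mk (⇑(b ^ j) w) =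
      (2 + X) ^ j * mk w + 2 * ((2 + X) ^ j - (1 + X) ^ j) := by
  induction j with
  | zero => simp
  | succ j ih =>
    have hbw : ⇑(b ^ (j + 1)) w = ⇑b (⇑(b ^ j) w) := by
      rw [pow_succ']; rfl
    rw [hbw]
    have hs := step (⇑(b ^ j) w)
    linear_combination (1 + X : PowerSeries X3) ^ j * hs + ((2 : PowerSeries X3) + X) * ih

/-- For every `k ≥ 1`, the element `b^{2·3ᵏ}` fixes the word
`1^{3ᵏ}` and permutes the three words `1^{3ᵏ}x` cyclically in the last letter:
`1^{3ᵏ}1 ↦ 1^{3ᵏ}2 ↦ 1^{3ᵏ}3 ↦ 1^{3ᵏ}1`.  (The letter `1` is `0 : Fin 3` and the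
cycle `1 ↦ 2 ↦ 3 ↦ 1` is `x ↦ x + 1` on `Fin 3`.) -/
theorem b_power_cycles_last_letter :
    ∀ k : ℕ, 1 ≤ k → ∀ w : ℕ → X3, (∀ i < 3 ^ k, w i = 0) →
      (∀ i < 3 ^ k, (b ^ (2 * 3 ^ k)) w i = 0) ∧
      (b ^ (2 * 3 ^ k)) w (3 ^ k) = w (3 ^ k) + 1 := by
  intro k hk w hw
  set m := 3 ^ k with hm
  set Y : ℕ → X3 := ⇑(b ^ (2 * m)) w with hY
  have hmpos : 0 < m := Nat.pow_pos (by norm_num)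
  have e1 : ((1 : PowerSeries X3) + X) ^ (2 * m) = (1 + X ^ m) ^ 2 := by
    rw [pow_mul', frob, one_pow]
  have e2 : ((2 : PowerSeries X3) + X) ^ (2 * m) = (2 + X ^ m) ^ 2 := by
    rw [pow_mul', frob, two_pow3k]
  have hmast := master (2 * m) w
  rw [e1, e2] at hmast
  -- key identity, mod 3 cleaned
  have key : mk Y + mk Y * X ^ (2 * m) =
      mk w + mk w * X ^ m + mk w * X ^ (2 * m) + X ^ m + mk Y * X ^ m := by
    linear_combination hmast +
      (mk w + X ^ m * mk w + 2 + X ^ m - X ^ m * mk Y) * h3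
  -- first conclusion (for all i < m), also needed for i = 0
  have hfix : ∀ i < m, Y i = w i := by
    intro i hi
    have hc := congrArg (coeff (R := X3) i) key
    simp only [map_add, coeff_mk, coeff_mul_X_pow', coeff_X_pow] at hc
    rw [if_neg (show ¬ 2 * m ≤ i by omega), if_neg (show ¬ m ≤ i by omega),
      if_neg (show ¬ i = m by omega), if_neg (show ¬ 2 * m ≤ i by omega),
      if_neg (show ¬ m ≤ i by omega)] at hc
    simpa using hc
  constructor
  · intro i hi
    rw [hfix i hi, hw i hi]
  · have hc := congrArg (coeff (R := X3) m) key
    simp only [map_add, coeff_mk, coeff_mul_X_pow', coeff_X_pow] at hc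
    rw [if_neg (show ¬ 2 * m ≤ m by omega), if_pos (le_refl m)] at hc
    simp only [if_true, Nat.sub_self, add_zero] at hc
    rw [if_neg (show ¬ 2 * m ≤ m by omega)] at hc
    simp only [ite_self, add_zero] at hc
    rw [hfix 0 hmpos, hw 0 hmpos] at hc
    simp only [ite_self] at hc
    have : ∀ u v : X3, u = v + 0 + 1 + 0 → u = v + 1 := by decide
    exact this _ _ hc

end Lamplighter
end

section
/- For any two words w and w' of the same length over the state set {a, b, c}, there exists a finite word v over X such that the section w|_v equals w' (as words over {a, b, c}). -/
/-!
We formalize the automaton `A` of the paper: alphabet `X = {1,2,3}` is encoded as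
`Fin 3` (letter `i+1` ↦ `i`), states `a, b, c` are encoded as `0, 1, 2 : Fin 3`.
Each state induces a permutation of the space `ℕ → Fin 3` of infinite sequences.

Note on conventions: in the paper, products of tree automorphisms compose
left-to-right (in a word `s₁s₂⋯sₙ`, the letter `s₁` acts first); in Mathlib,
`(f * g) w = f (g w)`, i.e. the right factor acts first.  Hence a paper word
`uv` is rendered as the Lean product `v * u`; e.g. the paper's `α = ab⁻¹`
(apply `a`, then `b⁻¹`) is `b⁻¹ * a` below.
-/

namespace Lamplighter

/-- The section of a word over the states `{a, b, c}` (a list over `Fin 3`) at a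
single letter `x`: the section of `s₁s₂…sₙ` at `x` is `s₁|ₓ` followed by the
section of `s₂…sₙ` at the letter `s₁(x)`. -/
def wordSec : List (Fin 3) → X3 → List (Fin 3)
  | [], _ => []
  | s :: t, x => nxtA s x :: wordSec t (outA s x)

/-- The section `w|_v` of a word over the states at a finite word `v` over the
alphabet, obtained by iterating `wordSec`. -/
def secAt (w : List (Fin 3)) (v : List X3) : List (Fin 3) :=
  v.foldl wordSec w


/-! ### Auxiliary material for the proof of `section_transitive` -/

/-- The input word that, fed to a word starting with head state `p`, produces the
output word `y` passed to the tail. -/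
def liftInputs : Fin 3 → List X3 → List X3
  | _, [] => []
  | p, y :: ys => (outA p).symm y :: liftInputs (nxtA p ((outA p).symm y)) ys

lemma secAt_cons (w : List (Fin 3)) (x : X3) (v : List X3) :
    secAt w (x :: v) = secAt (wordSec w x) v := rfl

lemma secAt_append (w : List (Fin 3)) (u v : List X3) :
    secAt w (u ++ v) = secAt (secAt w u) v := List.foldl_append ..

lemma step_eq : ∀ p y : Fin 3, nxtA p ((outA p).symm y) = p - y := by decide

lemma secAt_cons_lift (y : List X3) : ∀ (p : Fin 3) (t : List (Fin 3)),
    secAt (p :: t) (liftInputs p y) = (p - y.sum) :: secAt t y := by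
  induction y with
  | nil => intro p t; simp [liftInputs, secAt]
  | cons y ys ih =>
    intro p t
    have h1 : wordSec (p :: t) ((outA p).symm y) = (p - y) :: wordSec t y := by
      rw [wordSec, step_eq, Equiv.apply_symm_apply]
    rw [liftInputs, secAt_cons, h1, step_eq, ih, secAt_cons]
    rw [List.sum_cons, sub_sub]

/-- The special word `z` fixed by the section at letter `1`. -/
def zWord : ℕ → List (Fin 3)
  | 0 => []
  | k + 1 => 2 :: List.replicate k 0

lemma zWord_length (n : ℕ) : (zWord n).length = n := by
  cases n <;> simp [zWord]

lemma rep_fix (k : ℕ) : wordSec (List.replicate k (0 : Fin 3)) 0 =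
    List.replicate k (0 : Fin 3) := by
  induction k with
  | zero => rfl
  | succ k ih =>
    show wordSec ((0 : Fin 3) :: List.replicate k 0) 0 = _
    rw [wordSec]
    have h0 : nxtA 0 0 = 0 := by decide
    have h1 : outA 0 0 = 0 := by decide
    rw [h0, h1, ih]
    rfl

lemma zWord_fix (n : ℕ) : wordSec (zWord n) 1 = zWord n := by
  cases n with
  | zero => rfl
  | succ k =>
    show wordSec ((2 : Fin 3) :: List.replicate k 0) 1 = _
    rw [wordSec]
    have h0 : nxtA 2 1 = 2 := by decide
    have h1 : outA 2 1 = 0 := by decide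
    rw [h0, h1, rep_fix]
    rfl

lemma zWord_loop (n : ℕ) : ∀ k : ℕ,
    secAt (zWord n) (List.replicate k (1 : X3)) = zWord n := by
  intro k
  induction k with
  | zero => rfl
  | succ k ih =>
    show secAt (zWord n) ((1 : X3) :: List.replicate k 1) = _
    rw [secAt_cons, zWord_fix, ih]

open Fin.NatCast in
lemma sum_replicate_one (k : ℕ) :
    (List.replicate k (1 : X3)).sum = (k : Fin 3) := by
  induction k with
  | zero => rfl
  | succ k ih => rw [List.replicate_succ, List.sum_cons, ih]; push_cast; open Fin.CommRing in ring

theorem section_transitive_aux :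
    ∀ n (w w' : List (Fin 3)), w.length = n → w'.length = n →
      ∃ v : List X3, secAt w v = w' := by
  intro n
  induction n with
  | zero =>
    intro w w' hw hw'
    rw [List.length_eq_zero_iff] at hw hw'
    exact ⟨[], by simp [hw, hw', secAt]⟩
  | succ n ih =>
    intro w w' hw hw'
    obtain ⟨s, t, rfl⟩ : ∃ s t, w = s :: t := by
      cases w with
      | nil => simp at hw
      | cons s t => exact ⟨s, t, rfl⟩
    obtain ⟨s', t', rfl⟩ : ∃ s' t', w' = s' :: t' := by
      cases w' with
      | nil => simp at hw'
      | cons s' t' => exact ⟨s', t', rfl⟩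
    have ht : t.length = n := by simpa using hw
    have ht' : t'.length = n := by simpa using hw'
    obtain ⟨y, hy⟩ := ih t t' ht ht'
    set p : Fin 3 := s - y.sum with hp
    obtain ⟨va, hva⟩ := ih t' (zWord n) ht' (zWord_length n)
    obtain ⟨vb, hvb⟩ := ih (zWord n) t' (zWord_length n) ht'
    set k : Fin 3 := p - s' - va.sum - vb.sum with hk
    set v₂ : List X3 := va ++ List.replicate k.val 1 ++ vb with hv₂
    have h2 : secAt t' v₂ = t' := by
      rw [hv₂, secAt_append, secAt_append, hva, zWord_loop, hvb]
    have hsum : v₂.sum = p - s' := by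
      rw [hv₂, List.sum_append, List.sum_append, sum_replicate_one,
        Fin.cast_val_eq_self, hk]
      open Fin.CommRing in ring
    refine ⟨liftInputs s y ++ liftInputs p v₂, ?_⟩
    rw [secAt_append, secAt_cons_lift, hy, ← hp, secAt_cons_lift, h2, hsum]
    congr 1
    exact sub_sub_cancel p s'

/-- Any word of length `n` over `{a, b, c}` is a section of any
other word of length `n`: for words `w, w'` of equal length there is a finite
word `v` over the alphabet with `w|_v = w'`. -/
theorem section_transitive :
    ∀ w w' : List (Fin 3), w.length = w'.length →
      ∃ v : List X3, secAt w v = w' := fun w w' h =>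
  section_transitive_aux w.length w w' rfl h.symm

end Lamplighter
end

section
/- The semigroup generated by a, b, c is free of rank 3: the monoid homomorphism from the free monoid on three generators to the permutation group of X^ℕ sending the three generators to a, b, c respectively is injective. -/
/-!
We formalize the automaton `A` of the paper: alphabet `X = {1,2,3}` is encoded as
`Fin 3` (letter `i+1` ↦ `i`), states `a, b, c` are encoded as `0, 1, 2 : Fin 3`.
Each state induces a permutation of the space `ℕ → Fin 3` of infinite sequences.

Note on conventions: in the paper, products of tree automorphisms compose
left-to-right (in a word `s₁s₂⋯sₙ`, the letter `s₁` acts first); in Mathlib,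
`(f * g) w = f (g w)`, i.e. the right factor acts first.  Hence a paper word
`uv` is rendered as the Lean product `v * u`; e.g. the paper's `α = ab⁻¹`
(apply `a`, then `b⁻¹`) is `b⁻¹ * a` below.
-/

namespace Lamplighter

section Proof

private def nxt3 : ZMod 3 → ZMod 3 → ZMod 3 := nxtA
private def out3 : ZMod 3 → Equiv.Perm (ZMod 3) := outA

/-- The linear part: the action of state `a`. -/
def Aw : (ℕ → ZMod 3) → ℕ → ZMod 3 := fwd nxt3 out3 0

def eps : ℕ → ZMod 3 := fun n => (-1) ^ (n + 1)

lemma nxt3_eq (s x : ZMod 3) : nxt3 s x = x - s := by revert s x; decide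

lemma out3_eq (s x : ZMod 3) : out3 s x = -x - s := by revert s x; decide

lemma run_state (s : ZMod 3) (w : ℕ → ZMod 3) (n : ℕ) :
    run nxt3 s w n = run nxt3 0 w n + (-1) ^ n * s := by
  induction n with
  | zero => simp [run]
  | succ n ih => rw [run, run, ih, nxt3_eq, nxt3_eq]; ring

lemma fwd_state (s : ZMod 3) (w : ℕ → ZMod 3) (n : ℕ) :
    fwd nxt3 out3 s w n = Aw w n + (-1) ^ (n + 1) * s := by
  rw [fwd, Aw, fwd, out3_eq, out3_eq, run_state]; ring

lemma run_add_s11 (w v : ℕ → ZMod 3) (n : ℕ) :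
    run nxt3 0 (fun i => w i + v i) n = run nxt3 0 w n + run nxt3 0 v n := by
  induction n with
  | zero => simp [run]
  | succ n ih => rw [run, run, run, ih, nxt3_eq, nxt3_eq, nxt3_eq]; ring

lemma Aw_add (w v : ℕ → ZMod 3) (n : ℕ) :
    Aw (fun i => w i + v i) n = Aw w n + Aw v n := by
  rw [Aw, fwd, fwd, fwd, out3_eq, out3_eq, out3_eq, run_add_s11]; ring

lemma Aw_zero (n : ℕ) : Aw (fun _ => 0) n = 0 := by
  have h : ∀ m, run nxt3 0 (fun _ => (0 : ZMod 3)) m = 0 := by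
    intro m
    induction m with
    | zero => rfl
    | succ m ih => rw [run, ih, nxt3_eq]; ring
  rw [Aw, fwd, out3_eq, h]; ring

lemma Aw_coord_zero (w : ℕ → ZMod 3) : Aw w 0 = -(w 0) := by
  rw [Aw, fwd, out3_eq]; show -w 0 - 0 = _; ring

lemma Aw_coord_succ (w : ℕ → ZMod 3) (n : ℕ) :
    Aw w (n + 1) + Aw w n = w n - w (n + 1) := by
  rw [Aw, fwd, fwd, out3_eq, out3_eq, run, nxt3_eq]
  have h3 : (3 : ZMod 3) = 0 := by decide
  linear_combination (-(w n)) * h3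
/-- Reinterpret a letter/state as an element of `ZMod 3`. -/
def toZ (s : Fin 3) : ZMod 3 := s

lemma toZ_zero : toZ 0 = 0 := by decide
lemma toZ_one : toZ 1 = 1 := by decide
lemma toZ_two : toZ 2 = 2 := by decide

lemma gen_apply (s : Fin 3) (w : ℕ → ZMod 3) (n : ℕ) :
    Aw w n + eps n * toZ s = (![a, b, c] s) w n := by
  fin_cases s
  · show _ = fwd nxt3 out3 0 w n
    rw [fwd_state, eps]; norm_num [toZ]; exact mul_zero _
  · show _ = fwd nxt3 out3 1 w n
    rw [fwd_state, eps]; norm_num [toZ]; exact mul_one _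
  · show _ = fwd nxt3 out3 2 w n
    rw [fwd_state, eps]; norm_num [toZ]; rfl
/-- The translation part of the affine map given by a word. -/
def Cc : List (Fin 3) → ℕ → ZMod 3
  | [] => fun _ => 0
  | s :: u => fun n => Aw (Cc u) n + eps n * toZ s

lemma lift_apply (u : List (Fin 3)) (w : ℕ → ZMod 3) (n : ℕ) :
    Aw^[u.length] w n + Cc u n
      = (FreeMonoid.lift (![a, b, c] : Fin 3 → Equiv.Perm (ℕ → X3))
          (FreeMonoid.ofList u)) w n := by
  induction u generalizing n with
  | nil =>
    rw [show FreeMonoid.ofList ([] : List (Fin 3)) = 1 from rfl, map_one]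
    show Aw^[0] w n + (0 : ZMod 3) = w n
    simp
  | cons s u ih =>
    rw [show FreeMonoid.ofList (s :: u) = FreeMonoid.of s * FreeMonoid.ofList u from rfl,
      map_mul, FreeMonoid.lift_eval_of]
    erw [Equiv.Perm.mul_apply]
    erw [← gen_apply]
    have hw : ((FreeMonoid.lift (![a, b, c] : Fin 3 → Equiv.Perm (ℕ → X3))
        (FreeMonoid.ofList u)) w : ℕ → ZMod 3)
        = fun m => Aw^[u.length] w m + Cc u m := by
      funext m; rw [← ih]
    rw [hw, Aw_add]
    show Aw^[u.length + 1] w n + Cc (s :: u) n = _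
    rw [Function.iterate_succ_apply', Cc]
    ring
open PowerSeries in
lemma key_mul (w : ℕ → ZMod 3) :
    (1 + X) * PowerSeries.mk (Aw w) = (X - 1) * PowerSeries.mk w := by
  ext n
  rw [add_mul, sub_mul, one_mul, one_mul, map_add, map_sub]
  cases n with
  | zero =>
    rw [coeff_zero_X_mul, coeff_zero_X_mul, coeff_mk, coeff_mk, Aw_coord_zero]
    ring
  | succ n =>
    rw [coeff_succ_X_mul, coeff_succ_X_mul, coeff_mk, coeff_mk, coeff_mk, coeff_mk]
    have := Aw_coord_succ w n
    linear_combination this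

open PowerSeries in
lemma iter_mul (k : ℕ) (w : ℕ → ZMod 3) :
    (1 + X) ^ k * PowerSeries.mk (Aw^[k] w) = (X - 1) ^ k * PowerSeries.mk w := by
  induction k generalizing w with
  | zero => simp
  | succ k ih =>
    rw [Function.iterate_succ_apply, pow_succ, pow_succ]
    calc (1 + X) ^ k * (1 + X) * PowerSeries.mk (Aw^[k] (Aw w))
        = (1 + X) * ((1 + X) ^ k * PowerSeries.mk (Aw^[k] (Aw w))) := by ring
      _ = (1 + X) * ((X - 1) ^ k * PowerSeries.mk (Aw w)) := by rw [ih]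
      _ = (X - 1) ^ k * ((1 + X) * PowerSeries.mk (Aw w)) := by ring
      _ = (X - 1) ^ k * ((X - 1) * PowerSeries.mk w) := by rw [key_mul]
      _ = (X - 1) ^ k * (X - 1) * PowerSeries.mk w := by ring

open PowerSeries in
lemma eps_mul : (1 + X) * PowerSeries.mk eps = -1 := by
  ext n
  rw [add_mul, one_mul, map_add]
  cases n with
  | zero =>
    rw [coeff_zero_X_mul, coeff_mk]
    show eps 0 + 0 = _
    rw [map_neg, coeff_one]
    decide
  | succ n =>
    rw [coeff_succ_X_mul, coeff_mk, coeff_mk, map_neg, coeff_one]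
    simp only [Nat.succ_ne_zero, if_false, neg_zero]
    show (-1 : ZMod 3) ^ (n + 1 + 1) + (-1) ^ (n + 1) = 0
    rw [pow_succ]
    ring
/-- The polynomial invariant of a word. -/
noncomputable def pp : List (Fin 3) → Polynomial (ZMod 3)
  | [] => 0
  | s :: u => (Polynomial.X - 1) * pp u - Polynomial.C (toZ s) * (1 + Polynomial.X) ^ u.length

open PowerSeries in
lemma mk_add (x y : ℕ → ZMod 3) :
    PowerSeries.mk (fun n => x n + y n) = PowerSeries.mk x + PowerSeries.mk y := by
  ext n; rw [map_add, coeff_mk, coeff_mk, coeff_mk]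

open PowerSeries in
lemma pp_spec (u : List (Fin 3)) :
    (1 + X) ^ u.length * PowerSeries.mk (Cc u) = (pp u : PowerSeries (ZMod 3)) := by
  induction u with
  | nil =>
    have h0 : PowerSeries.mk (Cc []) = 0 := by
      ext n; rw [coeff_mk]; show (0 : ZMod 3) = _; simp
    rw [h0, pp, Polynomial.coe_zero, mul_zero]
  | cons s u ih =>
    have h1 : PowerSeries.mk (Cc (s :: u))
        = PowerSeries.mk (Aw (Cc u)) + PowerSeries.mk eps * PowerSeries.C (toZ s) := by
      ext n
      rw [map_add, coeff_mk, coeff_mul_C, coeff_mk, coeff_mk]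
      show Aw (Cc u) n + eps n * toZ s = _
      ring
    rw [show (s :: u : List (Fin 3)).length = u.length + 1 from rfl, h1, pp]
    push_cast [Polynomial.coe_sub, Polynomial.coe_mul, Polynomial.coe_pow, Polynomial.coe_add,
      Polynomial.coe_one, Polynomial.coe_X, Polynomial.coe_C]
    rw [← ih]
    calc (1 + X) ^ (u.length + 1)
          * (PowerSeries.mk (Aw (Cc u)) + PowerSeries.mk eps * PowerSeries.C (toZ s))
        = (1 + X) ^ u.length * ((1 + X) * PowerSeries.mk (Aw (Cc u)))
          + (1 + X) ^ u.length * ((1 + X) * PowerSeries.mk eps) * PowerSeries.C (toZ s) := by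
          ring
      _ = (1 + X) ^ u.length * ((X - 1) * PowerSeries.mk (Cc u))
          + (1 + X) ^ u.length * (-1) * PowerSeries.C (toZ s) := by
          rw [key_mul, eps_mul]
      _ = (X - 1) * ((1 + X) ^ u.length * PowerSeries.mk (Cc u))
          - PowerSeries.C (toZ s) * (1 + X) ^ u.length := by ring
lemma two_pow_ne (d : ℕ) : (2 : ZMod 3) ^ d ≠ 0 :=
  pow_ne_zero d (by decide)

lemma X_sub_one_ne : (Polynomial.X - 1 : Polynomial (ZMod 3)) ≠ 0 := by
  intro h
  have := congrArg (Polynomial.eval 0) h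
  simp at this

lemma one_add_X_ne : (1 + Polynomial.X : Polynomial (ZMod 3)) ≠ 0 := by
  intro h
  have := congrArg (Polynomial.eval 0) h
  simp at this

lemma pp_inj : ∀ u v : List (Fin 3), u.length = v.length → pp u = pp v → u = v := by
  intro u
  induction u with
  | nil => intro v hl _; exact (List.length_eq_zero_iff.mp hl.symm).symm
  | cons s u ih =>
    intro v hl hp
    cases v with
    | nil => exact absurd hl (by simp)
    | cons t v =>
      have hk : u.length = v.length := by simpa using hl
      rw [pp, pp, ← hk] at hp
      have hev := congrArg (Polynomial.eval 1) hp
      simp only [Polynomial.eval_sub, Polynomial.eval_mul, Polynomial.eval_pow,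
        Polynomial.eval_add, Polynomial.eval_one, Polynomial.eval_X, Polynomial.eval_C,
        sub_self, zero_mul, zero_sub, neg_inj] at hev
      have h2 : ((1 : ZMod 3) + 1) = 2 := by decide
      rw [h2] at hev
      have hst : toZ s = toZ t := mul_right_cancel₀ (two_pow_ne u.length) hev
      have hst' : s = t := hst
      have hppuv : (Polynomial.X - 1) * pp u = (Polynomial.X - 1) * pp v := by
        rw [hst'] at hp
        linear_combination hp
      have := mul_left_cancel₀ X_sub_one_ne hppuv
      rw [hst', ih v hk this]

open PowerSeries in
lemma iter_len_aux {k m : ℕ} (hkm : k < m)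
    (h : ∀ w n, Aw^[k] w n = Aw^[m] w n) : False := by
  set δ : ℕ → ZMod 3 := fun n => if n = 0 then 1 else 0 with hδ
  have hmkδ : PowerSeries.mk δ = 1 := by
    ext n; rw [coeff_mk, coeff_one]
  have hkm' : PowerSeries.mk (Aw^[k] δ) = PowerSeries.mk (Aw^[m] δ) := by
    ext n; rw [coeff_mk, coeff_mk]; exact h δ n
  have e1 := iter_mul k δ
  have e2 := iter_mul m δ
  rw [hmkδ, mul_one] at e1 e2
  have eser : ((1 + X) ^ m * (X - 1) ^ k : PowerSeries (ZMod 3))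
      = (1 + X) ^ k * (X - 1) ^ m := by
    calc (1 + X) ^ m * (X - 1) ^ k
        = (1 + X) ^ m * ((1 + X) ^ k * PowerSeries.mk (Aw^[k] δ)) := by rw [e1]
      _ = (1 + X) ^ k * ((1 + X) ^ m * PowerSeries.mk (Aw^[m] δ)) := by rw [hkm']; ring
      _ = (1 + X) ^ k * (X - 1) ^ m := by rw [e2]
  have epoly : ((1 + Polynomial.X) ^ m * (Polynomial.X - 1) ^ k : Polynomial (ZMod 3))
      = (1 + Polynomial.X) ^ k * (Polynomial.X - 1) ^ m := by
    apply Polynomial.coe_inj.mp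
    push_cast [Polynomial.coe_mul, Polynomial.coe_pow, Polynomial.coe_add, Polynomial.coe_sub,
      Polynomial.coe_one, Polynomial.coe_X]
    exact eser
  obtain ⟨d, rfl⟩ : ∃ d, m = k + d := ⟨m - k, by omega⟩
  have hd : d ≠ 0 := by omega
  have hcancel : ((1 + Polynomial.X) ^ k * (Polynomial.X - 1) ^ k : Polynomial (ZMod 3))
        * (1 + Polynomial.X) ^ d
      = ((1 + Polynomial.X) ^ k * (Polynomial.X - 1) ^ k) * (Polynomial.X - 1) ^ d := by
    rw [pow_add, pow_add] at epoly
    linear_combination epoly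
  have hne : ((1 + Polynomial.X) ^ k * (Polynomial.X - 1) ^ k : Polynomial (ZMod 3)) ≠ 0 :=
    mul_ne_zero (pow_ne_zero _ one_add_X_ne) (pow_ne_zero _ X_sub_one_ne)
  have := mul_left_cancel₀ hne hcancel
  have hev := congrArg (Polynomial.eval 1) this
  simp only [Polynomial.eval_pow, Polynomial.eval_add, Polynomial.eval_sub, Polynomial.eval_one,
    Polynomial.eval_X, sub_self, zero_pow hd] at hev
  rw [show ((1 : ZMod 3) + 1) = 2 by decide] at hev
  exact two_pow_ne d hev

lemma iter_len {k m : ℕ} (h : ∀ w n, Aw^[k] w n = Aw^[m] w n) : k = m := by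
  rcases lt_trichotomy k m with hlt | heq | hgt
  · exact absurd h (fun hh => iter_len_aux hlt hh)
  · exact heq
  · exact absurd (fun w n => (h w n).symm) (fun hh => iter_len_aux hgt hh)
end Proof

/-- The semigroup generated by `a, b, c` is free of rank 3:
the monoid homomorphism from the free monoid on three generators to the
permutation group of `X^ℕ` sending the generators to `a, b, c` is injective. -/
theorem free_semigroup :
    Function.Injective (FreeMonoid.lift (![a, b, c] : Fin 3 → Equiv.Perm (ℕ → X3))) := by
  intro x y h
  set u := FreeMonoid.toList x with hu
  set v := FreeMonoid.toList y with hv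
  have hx : FreeMonoid.ofList u = x := FreeMonoid.ofList_toList x
  have hy : FreeMonoid.ofList v = y := FreeMonoid.ofList_toList y
  have hpt : ∀ (w : ℕ → ZMod 3) (n : ℕ),
      Aw^[u.length] w n + Cc u n = Aw^[v.length] w n + Cc v n := by
    intro w n
    rw [lift_apply, lift_apply, hx, hy, h]
  have hz : ∀ j : ℕ, Aw^[j] (fun _ => (0 : ZMod 3)) = fun _ => 0 :=
    fun j => Function.iterate_fixed (funext Aw_zero) j
  have hC : ∀ n, Cc u n = Cc v n := by
    intro n
    have h0 := hpt (fun _ => 0) n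
    rw [hz, hz] at h0
    simpa using h0
  have hlen : u.length = v.length := by
    apply iter_len
    intro w n
    have h1 := hpt w n
    rw [hC n] at h1
    exact add_right_cancel h1
  have hmk : PowerSeries.mk (Cc u) = PowerSeries.mk (Cc v) := by
    ext n
    rw [PowerSeries.coeff_mk, PowerSeries.coeff_mk]
    exact hC n
  have hpp : pp u = pp v := by
    apply Polynomial.coe_inj.mp
    rw [← pp_spec u, ← pp_spec v, hmk, hlen]
  have huv : u = v := pp_inj u v hlen hpp
  rw [← hx, ← hy, huv]
end Lamplighter
end
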